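/- Let p be a prime, let X be the Pontryagin dual of the discrete abelian group ℤ[1/p]² (the compact group of characters with the topology of pointwise convergence), and let α̂ be the homeomorphic automorphism of X dual to α(a,b) = (a+b,b), i.e., α̂(χ) = χ∘α. Then the set of α̂-invariant Borel probability measures on X with finite support is NOT dense, in the topology of weak convergence of probability measures, in the set of all α̂-invariant Borel probability measures on X. -/

import Mathlib

def Zp (p : ℕ) : AddSubgroup ℚ where
  carrier := {q : ℚ | ∃ (k : ℤ) (n : ℕ), q * (p : ℚ) ^ n = (k : ℚ)}
  zero_mem' := ⟨0, 0, by norm_num⟩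
  add_mem' := by
    rintro a b ⟨k1, n1, h1⟩ ⟨k2, n2, h2⟩
    refine ⟨k1 * (p : ℤ) ^ n2 + k2 * (p : ℤ) ^ n1, n1 + n2, ?_⟩
    push_cast
    calc (a + b) * (p : ℚ) ^ (n1 + n2)
        = a * (p : ℚ) ^ n1 * (p : ℚ) ^ n2 + b * (p : ℚ) ^ n2 * (p : ℚ) ^ n1 := by
          rw [pow_add]; ring
      _ = (k1 : ℚ) * (p : ℚ) ^ n2 + (k2 : ℚ) * (p : ℚ) ^ n1 := by rw [h1, h2]
  neg_mem' := by
    rintro a ⟨k, n, h⟩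
    refine ⟨-k, n, ?_⟩
    push_cast
    rw [neg_mul, h]


open MeasureTheory

/-- The Pontryagin dual of the discrete abelian group `ℤ[1/p]²`: the group of characters
with values in the circle group. -/
abbrev Xp (p : ℕ) : Type := AddChar (Zp p × Zp p) Circle

/-- The topology of pointwise convergence on the dual. -/
noncomputable instance (p : ℕ) : TopologicalSpace (Xp p) :=
  TopologicalSpace.induced (fun χ : Xp p => (χ : Zp p × Zp p → Circle)) Pi.topologicalSpace

noncomputable instance (p : ℕ) : MeasurableSpace (Xp p) := borel (Xp p)

instance (p : ℕ) : BorelSpace (Xp p) := ⟨rfl⟩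

/-- The automorphism `α(a,b) = (a+b, b)` of `ℤ[1/p]²`, as an additive monoid hom. -/
def alphaHom (p : ℕ) : Zp p × Zp p →+ Zp p × Zp p where
  toFun x := (x.1 + x.2, x.2)
  map_zero' := by
    refine Prod.ext ?_ rfl
    show (0 : Zp p) + 0 = 0
    simp
  map_add' x y := by
    refine Prod.ext ?_ rfl
    show x.1 + y.1 + (x.2 + y.2) = x.1 + x.2 + (y.1 + y.2)
    abel

/-- The dual action `α̂(χ) = χ ∘ α` on the dual group. -/
noncomputable def alphaHat (p : ℕ) : Xp p → Xp p :=
  fun χ => χ.compAddMonoidHom (alphaHom p)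

namespace NoDense

variable (p : ℕ)

lemma inducing_coe : Topology.IsInducing (fun χ : Xp p => (χ : Zp p × Zp p → Circle)) := ⟨rfl⟩

lemma embedding_coe : Topology.IsEmbedding (fun χ : Xp p => (χ : Zp p × Zp p → Circle)) :=
  ⟨inducing_coe p, DFunLike.coe_injective⟩

instance : T2Space (Xp p) := (embedding_coe p).t2Space

lemma continuous_eval (g : Zp p × Zp p) : Continuous fun χ : Xp p => χ g :=
  (continuous_apply g).comp (inducing_coe p).continuous

lemma continuous_eval_c (g : Zp p × Zp p) : Continuous fun χ : Xp p => (χ g : ℂ) :=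
  continuous_subtype_val.comp (continuous_eval p g)

instance : IsTopologicalGroup (Xp p) where
  continuous_mul := by
    apply continuous_induced_rng.2
    apply continuous_pi
    intro g
    exact ((continuous_eval p g).comp continuous_fst).mul ((continuous_eval p g).comp continuous_snd)
  continuous_inv := by
    apply continuous_induced_rng.2
    apply continuous_pi
    intro g
    show Continuous fun χ : Xp p => χ⁻¹ g
    simp only [AddChar.inv_apply]
    exact continuous_eval p (-g)

lemma isClosed_range_coe :
    IsClosed (Set.range (fun χ : Xp p => (χ : Zp p × Zp p → Circle))) := by
  have : Set.range (fun χ : Xp p => (χ : Zp p × Zp p → Circle)) =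
      {f : Zp p × Zp p → Circle | f 0 = 1 ∧ ∀ a b, f (a + b) = f a * f b} := by
    ext f
    constructor
    · rintro ⟨χ, rfl⟩
      exact ⟨χ.map_zero_eq_one, χ.map_add_eq_mul⟩
    · rintro ⟨h0, hadd⟩
      exact ⟨⟨f, h0, hadd⟩, rfl⟩
  rw [this]
  apply IsClosed.inter
  · exact isClosed_eq (continuous_apply 0) continuous_const
  · show IsClosed {f : Zp p × Zp p → Circle | ∀ a b, f (a + b) = f a * f b}
    rw [Set.setOf_forall]
    refine isClosed_iInter fun a => ?_
    rw [Set.setOf_forall]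
    refine isClosed_iInter fun b => ?_
    exact isClosed_eq (continuous_apply _) ((continuous_apply a).mul (continuous_apply b))

instance : CompactSpace (Xp p) := by
  rw [← isCompact_univ_iff, (embedding_coe p).isCompact_iff, Set.image_univ]
  exact (isClosed_range_coe p).isCompact


open Real

def oneZ : Zp p := ⟨1, 1, 0, by norm_num⟩

def invPow (n : ℕ) : Zp p := ⟨((p:ℚ)⁻¹) ^ n, by
  rcases eq_or_ne (p:ℚ) 0 with h | h
  · rcases Nat.eq_zero_or_pos n with hn | hn
    · exact ⟨1, 0, by simp [hn]⟩
    · exact ⟨0, n, by simp [h, zero_pow hn.ne']⟩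
  · exact ⟨1, n, by rw [← mul_pow, inv_mul_cancel₀ h, one_pow]; norm_num⟩⟩

@[simp] lemma invPow_val (n : ℕ) : ((invPow p n : Zp p) : ℚ) = ((p:ℚ)⁻¹) ^ n := rfl
@[simp] lemma oneZ_val : ((oneZ p : Zp p) : ℚ) = 1 := rfl

def projQ1 : Zp p × Zp p →+ ℝ where
  toFun g := ((g.1 : ℚ) : ℝ)
  map_zero' := by norm_num
  map_add' a b := by
    show (((a + b).1 : ℚ) : ℝ) = ((a.1 : ℚ) : ℝ) + ((b.1 : ℚ) : ℝ)
    rw [Prod.fst_add]; push_cast; ring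

def projQ2 : Zp p × Zp p →+ ℝ where
  toFun g := ((g.2 : ℚ) : ℝ)
  map_zero' := by norm_num
  map_add' a b := by
    show (((a + b).2 : ℚ) : ℝ) = ((a.2 : ℚ) : ℝ) + ((b.2 : ℚ) : ℝ)
    rw [Prod.snd_add]; push_cast; ring

/-- The base character `c(a,b) = exp(2πi a)`. -/
noncomputable def cChar : Xp p := (Real.fourierChar).compAddMonoidHom (projQ1 p)

/-- The character `d(a,b) = exp(2πi b)`. -/
noncomputable def dChar : Xp p := (Real.fourierChar).compAddMonoidHom (projQ2 p)

lemma cChar_apply (g : Zp p × Zp p) : cChar p g = Circle.exp (2 * π * ((g.1 : ℚ) : ℝ)) := rfl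
lemma dChar_apply (g : Zp p × Zp p) : dChar p g = Circle.exp (2 * π * ((g.2 : ℚ) : ℝ)) := rfl

/-- The subgroup of characters trivial on the first factor and on `(0,1)`. -/
noncomputable def Khat : Subgroup (Xp p) where
  carrier := {χ : Xp p | (∀ a : Zp p, χ (a, 0) = 1) ∧ χ (0, oneZ p) = 1}
  one_mem' := ⟨fun a => rfl, rfl⟩
  mul_mem' := by
    rintro χ ψ ⟨h1, h2⟩ ⟨h3, h4⟩
    refine ⟨fun a => ?_, ?_⟩
    · rw [AddChar.mul_apply, h1 a, h3 a, mul_one]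
    · rw [AddChar.mul_apply, h2, h4, mul_one]
  inv_mem' := by
    rintro χ ⟨h1, h2⟩
    refine ⟨fun a => ?_, ?_⟩
    · rw [AddChar.inv_apply', h1 a, inv_one]
    · rw [AddChar.inv_apply', h2, inv_one]

lemma isClosed_Khat : IsClosed ((Khat p : Set (Xp p))) := by
  have : (Khat p : Set (Xp p)) =
      {χ : Xp p | ∀ a : Zp p, χ (a, 0) = 1} ∩ {χ : Xp p | χ (0, oneZ p) = 1} := rfl
  rw [this]
  apply IsClosed.inter
  · rw [Set.setOf_forall]
    exact isClosed_iInter fun a => isClosed_eq (continuous_eval p _) continuous_const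
  · exact isClosed_eq (continuous_eval p _) continuous_const

instance : CompactSpace (Khat p) :=
  isCompact_iff_compactSpace.mp (isClosed_Khat p).isCompact

instance : Nonempty (Khat p) := ⟨1⟩

instance : BorelSpace (Khat p) := Subtype.borelSpace (Khat p : Set (Xp p))

noncomputable def haarK : Measure (Khat p) :=
  Measure.haarMeasure (⊤ : TopologicalSpace.PositiveCompacts (Khat p))

instance : IsProbabilityMeasure (haarK p) := by
  constructor
  have := Measure.haarMeasure_self (K₀ := (⊤ : TopologicalSpace.PositiveCompacts (Khat p)))
  rw [TopologicalSpace.PositiveCompacts.coe_top] at this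
  exact this


lemma alphaHat_apply (χ : Xp p) (g : Zp p × Zp p) :
    alphaHat p χ g = χ (g.1 + g.2, g.2) := rfl

lemma continuous_alphaHat : Continuous (alphaHat p) := by
  apply continuous_induced_rng.2
  apply continuous_pi
  intro g
  exact continuous_eval p _

lemma measurable_alphaHat : Measurable (alphaHat p) := (continuous_alphaHat p).measurable

def betaHom : Zp p × Zp p →+ Zp p × Zp p where
  toFun x := (x.1 - x.2, x.2)
  map_zero' := by
    refine Prod.ext ?_ rfl
    show (0 : Zp p) - 0 = 0
    simp
  map_add' x y := by
    refine Prod.ext ?_ rfl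
    show x.1 + y.1 - (x.2 + y.2) = x.1 - x.2 + (y.1 - y.2)
    abel

lemma alphaHom_betaHom (g : Zp p × Zp p) : alphaHom p (betaHom p g) = g := by
  refine Prod.ext ?_ rfl
  show g.1 - g.2 + g.2 = g.1
  abel

lemma alphaHat_injective : Function.Injective (alphaHat p) := by
  intro χ ψ h
  ext g
  have h1 := DFunLike.congr_fun h (betaHom p g)
  rw [alphaHat_apply, alphaHat_apply] at h1
  have h2 : ((betaHom p g).1 + (betaHom p g).2, (betaHom p g).2) = g := alphaHom_betaHom p g
  rw [h2] at h1
  exact congrArg _ h1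

lemma alphaHat_iter (k : ℕ) (χ : Xp p) (g : Zp p × Zp p) :
    ((alphaHat p)^[k] χ) g = χ (g.1 + k • g.2, g.2) := by
  induction k generalizing χ with
  | zero => simp
  | succ n ih =>
    rw [Function.iterate_succ_apply, ih, alphaHat_apply]
    show χ ((g.1 + n • g.2) + g.2, g.2) = _
    rw [succ_nsmul, ← add_assoc]

lemma hK_eval {h : Xp p} (hh : h ∈ Khat p) (g : Zp p × Zp p) : h g = h (0, g.2) := by
  have : g = ((g.1, (0 : Zp p)) + ((0 : Zp p), g.2)) := by
    refine Prod.ext ?_ ?_ <;> simp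
  rw [this, AddChar.map_add_eq_mul, hh.1 g.1, one_mul]
  simp

lemma dChar_mem : dChar p ∈ Khat p := by
  constructor
  · intro a
    rw [dChar_apply]
    show Circle.exp (2 * π * (((0 : Zp p) : ℚ) : ℝ)) = 1
    norm_num [Circle.exp_zero]
  · rw [dChar_apply]
    show Circle.exp (2 * π * ((((oneZ p) : Zp p) : ℚ) : ℝ)) = 1
    rw [oneZ_val]
    rw [Circle.exp_eq_one]
    exact ⟨1, by push_cast; ring⟩

noncomputable def iota : Khat p → Xp p := fun h => cChar p * (h : Xp p)

lemma continuous_iota : Continuous (iota p) :=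
  continuous_const.mul continuous_subtype_val

lemma alphaHat_iota (h : Khat p) :
    alphaHat p (iota p h) = iota p ((⟨dChar p, dChar_mem p⟩ : Khat p) * h) := by
  refine AddChar.ext _ _ fun g => ?_
  rw [alphaHat_apply]
  show (cChar p) (g.1 + g.2, g.2) * (h : Xp p) (g.1 + g.2, g.2)
      = (cChar p) g * ((dChar p) g * (h : Xp p) g)
  rw [hK_eval p h.2 (g.1 + g.2, g.2), hK_eval p h.2 g]
  show (cChar p) (g.1 + g.2, g.2) * (h : Xp p) (0, g.2)
      = (cChar p) g * ((dChar p) g * (h : Xp p) (0, g.2))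
  rw [cChar_apply, cChar_apply, dChar_apply]
  show Circle.exp (2 * π * (((g.1 + g.2 : Zp p) : ℚ) : ℝ)) * (h : Xp p) (0, g.2) = _
  have harg : (2 * π * (((g.1 + g.2 : Zp p) : ℚ) : ℝ))
      = 2 * π * ((g.1 : ℚ) : ℝ) + 2 * π * ((g.2 : ℚ) : ℝ) := by push_cast; ring
  rw [harg, Circle.exp_add, mul_assoc]

noncomputable def mustar : Measure (Xp p) := (haarK p).map (iota p)

instance : (haarK p).IsMulLeftInvariant := Measure.isMulLeftInvariant_haarMeasure _

instance : IsProbabilityMeasure (mustar p) :=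
  MeasureTheory.Measure.isProbabilityMeasure_map (continuous_iota p).measurable.aemeasurable

lemma mustar_invariant : (mustar p).map (alphaHat p) = mustar p := by
  unfold mustar
  rw [Measure.map_map (measurable_alphaHat p) (continuous_iota p).measurable]
  have key : (alphaHat p) ∘ (iota p)
      = (iota p) ∘ (fun h : Khat p => (⟨dChar p, dChar_mem p⟩ : Khat p) * h) :=
    funext fun h => alphaHat_iota p h
  rw [key, ← Measure.map_map (continuous_iota p).measurable
      (measurable_const_mul _), MeasureTheory.map_mul_left_eq_self]


/-- The test function `F(χ) = (χ(1/p,0) - 1) · χ(0,1)`. -/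
noncomputable def Ff : Xp p → ℂ :=
  fun χ => ((χ (invPow p 1, 0) : ℂ) - 1) * (χ (0, oneZ p) : ℂ)

lemma continuous_Ff : Continuous (Ff p) :=
  ((continuous_eval_c p _).sub continuous_const).mul (continuous_eval_c p _)

lemma Ff_iota (h : Khat p) :
    Ff p (iota p h) = ((Circle.exp (2 * π * (p:ℝ)⁻¹) : ℂ) - 1) := by
  unfold Ff iota
  rw [AddChar.mul_apply, AddChar.mul_apply, h.2.1 (invPow p 1), h.2.2]
  rw [cChar_apply, cChar_apply]
  have h1 : ((((invPow p 1, (0:Zp p)).1 : Zp p) : ℚ) : ℝ) = (p:ℝ)⁻¹ := by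
    rw [invPow_val]; push_cast; ring
  have h2 : ((((0:Zp p), oneZ p).1 : ℚ) : ℝ) = 0 := by norm_num
  rw [h1, h2, mul_zero, Circle.exp_zero]
  push_cast
  ring

lemma integral_Ff_mustar :
    ∫ χ, Ff p χ ∂(mustar p) = ((Circle.exp (2 * π * (p:ℝ)⁻¹) : ℂ) - 1) := by
  unfold mustar
  rw [integral_map (continuous_iota p).measurable.aemeasurable
    (continuous_Ff p).aestronglyMeasurable]
  simp only [Ff_iota]
  simp [measure_univ]

lemma circle_coe_pow (z : Circle) (n : ℕ) : ((z ^ n : Circle) : ℂ) = (z : ℂ) ^ n :=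
  MonoidHom.map_pow Circle.coeHom z n

lemma Zp_val_nsmul (n : ℕ) (x : Zp p) : ((n • x : Zp p) : ℚ) = n * (x : ℚ) := by
  induction n with
  | zero => simp
  | succ k ih =>
    rw [succ_nsmul, AddSubgroup.coe_add, ih]
    push_cast
    ring

lemma integrable_cont (f : Xp p → ℂ) (hf : Continuous f) (ν : Measure (Xp p))
    [IsProbabilityMeasure ν] : Integrable f ν :=
  integrableOn_univ.mp (hf.continuousOn.integrableOn_compact isCompact_univ)

section claimA

variable {p}

lemma mass_invariant (ν : Measure (Xp p)) (hinv : ν.map (alphaHat p) = ν) (x : Xp p) :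
    ν {alphaHat p x} = ν {x} := by
  have h1 : (ν.map (alphaHat p)) {alphaHat p x} = ν ((alphaHat p) ⁻¹' {alphaHat p x}) :=
    Measure.map_apply (measurable_alphaHat p) (measurableSet_singleton _)
  have h2 : (alphaHat p) ⁻¹' {alphaHat p x} = {x} := by
    ext y
    simp only [Set.mem_preimage, Set.mem_singleton_iff]
    exact ⟨fun h => alphaHat_injective p h, fun h => by rw [h]⟩
  rw [hinv, h2] at h1
  exact h1

lemma mass_invariant_iter (ν : Measure (Xp p)) (hinv : ν.map (alphaHat p) = ν) (x : Xp p)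
    (k : ℕ) : ν {(alphaHat p)^[k] x} = ν {x} := by
  induction k with
  | zero => rfl
  | succ n ih =>
    rw [Function.iterate_succ_apply', mass_invariant ν hinv, ih]

lemma exists_period (ν : Measure (Xp p)) (hinv : ν.map (alphaHat p) = ν)
    (s : Finset (Xp p)) (hs : ν ((↑s : Set (Xp p)))ᶜ = 0) (x : Xp p) (hx : ν {x} ≠ 0) :
    ∃ n, 0 < n ∧ (alphaHat p)^[n] x = x := by
  have hmem : ∀ k : ℕ, (alphaHat p)^[k] x ∈ s := by
    intro k
    by_contra hk
    apply hx
    have h0 : ν {(alphaHat p)^[k] x} = 0 := by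
      refine le_antisymm (le_trans (measure_mono ?_) hs.le) (zero_le)
      intro y hy
      rw [Set.mem_singleton_iff] at hy
      subst hy
      exact hk
    rw [mass_invariant_iter ν hinv x k] at h0
    exact h0
  obtain ⟨k, l, hkl, heq⟩ := Finite.exists_ne_map_eq_of_infinite
    (fun k : ℕ => (⟨(alphaHat p)^[k] x, hmem k⟩ : {y // y ∈ s}))
  simp only [Subtype.mk.injEq] at heq
  rcases lt_or_gt_of_ne hkl with h | h
  · refine ⟨l - k, by omega, ?_⟩
    have : (alphaHat p)^[k] ((alphaHat p)^[l - k] x) = (alphaHat p)^[k] x := by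
      rw [← Function.iterate_add_apply]
      have : k + (l - k) = l := by omega
      rw [this, heq]
    exact Function.Injective.iterate (alphaHat_injective p) k this
  · refine ⟨k - l, by omega, ?_⟩
    have : (alphaHat p)^[l] ((alphaHat p)^[k - l] x) = (alphaHat p)^[l] x := by
      rw [← Function.iterate_add_apply]
      have : l + (k - l) = k := by omega
      rw [this, heq]
    exact Function.Injective.iterate (alphaHat_injective p) l this

lemma orbit_sum_zero (hp : p.Prime) {x : Xp p} {L : ℕ} (hL : 0 < L)
    (hfix : (alphaHat p)^[L] x = x) :
    ∑ k ∈ Finset.range L, Ff p ((alphaHat p)^[k] x) = 0 := by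
  have hp0 : (p : ℚ) ≠ 0 := by exact_mod_cast hp.ne_zero
  set t : Circle := x (oneZ p, 0) with ht_def
  set u : Circle := x (invPow p 1, 0) with hu_def
  set v : Circle := x (0, oneZ p) with hv_def
  -- the kill property
  have hkill : ∀ b : Zp p, x (L • b, 0) = 1 := by
    intro b
    have h1 := DFunLike.congr_fun hfix ((0 : Zp p), b)
    rw [alphaHat_iter] at h1
    have h2 : ((0 : Zp p) + L • b, b) = ((L • b, (0:Zp p)) + ((0:Zp p), b)) := by
      refine Prod.ext ?_ ?_ <;> simp
    rw [h2, AddChar.map_add_eq_mul] at h1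
    have h3 : x ((0:Zp p), b) = x (((0:Zp p), b)) := rfl
    exact (mul_eq_right).mp h1
  -- t ^ L = 1
  have hsmul1 : L • ((oneZ p, (0:Zp p))) = (L • oneZ p, (0:Zp p)) := by
    rw [Prod.smul_mk, smul_zero]
  have ht : t ^ L = 1 := by
    rw [ht_def, ← AddChar.map_nsmul_eq_pow, hsmul1]
    exact hkill (oneZ p)
  -- the terms
  have hterm : ∀ k, Ff p ((alphaHat p)^[k] x) = (((u:ℂ) - 1) * v) * (t:ℂ)^k := by
    intro k
    unfold Ff
    rw [alphaHat_iter, alphaHat_iter]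
    have e1 : ((invPow p 1, (0:Zp p)).1 + k • (invPow p 1, (0:Zp p)).2,
        (invPow p 1, (0:Zp p)).2) = (invPow p 1, (0:Zp p)) := by
      refine Prod.ext ?_ rfl
      show invPow p 1 + k • (0 : Zp p) = invPow p 1
      rw [smul_zero, add_zero]
    have e2 : (((0:Zp p), oneZ p).1 + k • ((0:Zp p), oneZ p).2, ((0:Zp p), oneZ p).2)
        = ((k • (oneZ p), (0:Zp p)) + ((0:Zp p), oneZ p)) := by
      refine Prod.ext ?_ ?_ <;> simp
    rw [e1, e2, AddChar.map_add_eq_mul]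
    have e3 : x (k • (oneZ p), (0:Zp p)) = t ^ k := by
      rw [ht_def, ← AddChar.map_nsmul_eq_pow]
      congr 1
      rw [Prod.smul_mk, smul_zero]
    rw [e3]
    rw [Circle.coe_mul, circle_coe_pow]
    ring
  simp only [hterm]
  rw [← Finset.mul_sum]
  by_cases hT : t = 1
  · -- then u = 1
    have hup : u ^ p = t := by
      rw [hu_def, ht_def, ← AddChar.map_nsmul_eq_pow]
      congr 1
      rw [Prod.smul_mk, smul_zero]
      refine Prod.ext ?_ rfl
      show p • invPow p 1 = oneZ p
      refine Subtype.ext ?_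
      rw [Zp_val_nsmul, invPow_val, oneZ_val, pow_one, mul_inv_cancel₀ hp0]
    set a := L.factorization p with ha_def
    set m := L / p ^ a with hm_def
    have hfac : p ^ a * m = L := Nat.ordProj_mul_ordCompl_eq_self L p
    have hpm : ¬ p ∣ m := Nat.not_dvd_ordCompl hp hL.ne'
    have hm0 : m ≠ 0 := by
      intro h
      rw [h, mul_zero] at hfac
      exact hL.ne' hfac.symm
    have hsm : m • invPow p 1 = L • invPow p (a+1) := by
      refine Subtype.ext ?_
      rw [Zp_val_nsmul, Zp_val_nsmul, invPow_val, invPow_val, ← hfac]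
      push_cast
      have hpa : (p:ℚ)^a * ((p:ℚ)⁻¹)^a = 1 := by rw [← mul_pow, mul_inv_cancel₀ hp0, one_pow]
      linear_combination (-((m:ℚ) * (p:ℚ)⁻¹)) * hpa
    have hum : u ^ m = 1 := by
      rw [hu_def, ← AddChar.map_nsmul_eq_pow]
      have : m • ((invPow p 1, (0:Zp p))) = (L • invPow p (a+1), (0:Zp p)) := by
        rw [Prod.smul_mk, smul_zero, hsm]
      rw [this]
      exact hkill (invPow p (a+1))
    have hu1 : u = 1 := by
      have h1 : orderOf u ∣ p := orderOf_dvd_of_pow_eq_one (by rw [hup, hT])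
      have h2 : orderOf u ∣ m := orderOf_dvd_of_pow_eq_one hum
      have h3 : orderOf u ∣ Nat.gcd p m := Nat.dvd_gcd h1 h2
      have h4 : Nat.gcd p m = 1 := (hp.coprime_iff_not_dvd.mpr hpm)
      rw [h4, Nat.dvd_one] at h3
      exact orderOf_eq_one_iff.mp h3
    rw [hu1]
    norm_num
  · have htC : (t : ℂ) ≠ 1 := by
      intro h
      exact hT (Circle.coe_eq_one.mp h)
    have htL : (t : ℂ) ^ L = 1 := by
      have h5 : ((t ^ L : Circle) : ℂ) = ((1 : Circle) : ℂ) := by rw [ht]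
      rw [circle_coe_pow] at h5
      exact h5
    rw [geom_sum_eq htC, htL, sub_self, zero_div, mul_zero]

lemma map_iter_invariant (ν : Measure (Xp p)) (hinv : ν.map (alphaHat p) = ν) (k : ℕ) :
    ν.map ((alphaHat p)^[k]) = ν := by
  induction k with
  | zero => exact Measure.map_id
  | succ n ih =>
    rw [Function.iterate_succ]
    rw [← Measure.map_map (Measurable.iterate (measurable_alphaHat p) n)
      (measurable_alphaHat p)]
    rw [hinv, ih]

lemma integral_Ff_zero (hp : p.Prime) (ν : Measure (Xp p)) [IsProbabilityMeasure ν]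
    (hinv : ν.map (alphaHat p) = ν) (s : Finset (Xp p))
    (hs : ν ((↑s : Set (Xp p)))ᶜ = 0) :
    ∫ χ, Ff p χ ∂ν = 0 := by
  classical
  -- periods
  have hper := exists_period ν hinv s hs
  obtain ⟨nfun, hnpos, hnfix⟩ : ∃ nfun : Xp p → ℕ, (∀ x, 0 < nfun x) ∧
      (∀ x, ν {x} ≠ 0 → (alphaHat p)^[nfun x] x = x) := by
    refine ⟨fun x => if h : ν {x} ≠ 0 then (hper x h).choose else 1, fun x => ?_, fun x h => ?_⟩
    · dsimp only
      by_cases h : ν {x} ≠ 0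
      · rw [dif_pos h]
        exact (hper x h).choose_spec.1
      · rw [dif_neg h]
        exact one_pos
    · dsimp only
      rw [dif_pos h]
      exact (hper x h).choose_spec.2
  set L : ℕ := ∏ x ∈ s, nfun x with hL_def
  have hL : 0 < L := Finset.prod_pos fun x _ => hnpos x
  have hfixL : ∀ x ∈ s, ν {x} ≠ 0 → (alphaHat p)^[L] x = x := by
    intro x hxs hx
    obtain ⟨c, hc⟩ := Finset.dvd_prod_of_mem nfun hxs
    have hfix : Function.IsFixedPt ((alphaHat p)^[nfun x]) x := hnfix x hx
    have := hfix.iterate c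
    rwa [← Function.iterate_mul, ← hc] at this
  -- iterate invariance of integrals
  have hint : ∀ k : ℕ, ∫ χ, Ff p ((alphaHat p)^[k] χ) ∂ν = ∫ χ, Ff p χ ∂ν := by
    intro k
    conv_rhs => rw [← map_iter_invariant ν hinv k]
    rw [integral_map (Measurable.iterate (measurable_alphaHat p) k).aemeasurable
      (continuous_Ff p).aestronglyMeasurable]
  -- integral of the orbit sum
  have hGint : Integrable (fun χ => ∑ k ∈ Finset.range L, Ff p ((alphaHat p)^[k] χ)) ν := by
    apply integrable_finset_sum
    intro k _
    exact integrable_cont p _ ((continuous_Ff p).comp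
      ((continuous_alphaHat p).iterate k)) ν
  have hsum : ∫ χ, (∑ k ∈ Finset.range L, Ff p ((alphaHat p)^[k] χ)) ∂ν
      = (L : ℂ) * ∫ χ, Ff p χ ∂ν := by
    rw [integral_finset_sum]
    · simp only [hint]
      rw [Finset.sum_const, Finset.card_range, nsmul_eq_mul]
    · intro k _
      exact integrable_cont p _ ((continuous_Ff p).comp
        ((continuous_alphaHat p).iterate k)) ν
  -- the integral of the orbit sum is zero by finite support
  have hres : ν.restrict (↑s : Set (Xp p)) = ν := by
    apply Measure.restrict_eq_self_of_ae_mem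
    rw [MeasureTheory.ae_iff]
    exact hs
  have hzero : ∫ χ, (∑ k ∈ Finset.range L, Ff p ((alphaHat p)^[k] χ)) ∂ν = 0 := by
    conv_lhs => rw [← hres]
    rw [MeasureTheory.integral_finset s (hGint.restrict)]
    apply Finset.sum_eq_zero
    intro x hxs
    by_cases hx : ν {x} = 0
    · rw [measureReal_def, hx, ENNReal.toReal_zero, zero_smul]
    · rw [orbit_sum_zero hp hL (hfixL x hxs hx), smul_zero]
  rw [hzero] at hsum
  have hLne : (L : ℂ) ≠ 0 := by exact_mod_cast hL.ne'
  exact (mul_eq_zero.mp hsum.symm).resolve_left hLne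

end claimA


lemma re_z0_ne_zero (hp : p.Prime) :
    (((Circle.exp (2 * π * (p:ℝ)⁻¹)) : ℂ) - 1).re ≠ 0 := by
  have h2 : (2:ℝ) ≤ (p:ℝ) := by exact_mod_cast hp.two_le
  have hπ : (0:ℝ) < π := Real.pi_pos
  have hcos : ((Circle.exp (2 * π * (p:ℝ)⁻¹) : ℂ)).re = Real.cos (2 * π * (p:ℝ)⁻¹) := by
    rw [Circle.coe_exp, Complex.exp_re]
    simp [Complex.mul_re, Complex.I_re, Complex.I_im]
  rw [Complex.sub_re, Complex.one_re, hcos]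
  intro heq
  have hcos1 : Real.cos (2 * π * (p:ℝ)⁻¹) = 1 := by linarith
  obtain ⟨n, hn⟩ := (Real.cos_eq_one_iff _).mp hcos1
  have h2π : (2 * π) ≠ 0 := by positivity
  have hn' : (n : ℝ) = (p:ℝ)⁻¹ := by
    have : (n : ℝ) * (2 * π) = (p:ℝ)⁻¹ * (2 * π) := by rw [hn]; ring
    exact mul_right_cancel₀ h2π this
  have hpos : (0:ℝ) < (p:ℝ)⁻¹ := by positivity
  have hlt : (p:ℝ)⁻¹ < 1 := by
    rw [inv_lt_one_iff₀]
    right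
    linarith
  have h0n : (0:ℝ) < (n:ℝ) := by rw [hn']; exact hpos
  have h1n : (n:ℝ) < 1 := by rw [hn']; exact hlt
  have h0n' : (0:ℤ) < n := by exact_mod_cast h0n
  have h1n' : n < 1 := by exact_mod_cast h1n
  omega

lemma integral_re_Ff (ν : Measure (Xp p)) [IsProbabilityMeasure ν] :
    ∫ χ, (Ff p χ).re ∂ν = (∫ χ, Ff p χ ∂ν).re := by
  have h := integral_re (𝕜 := ℂ) (integrable_cont p _ (continuous_Ff p) ν)
  simpa using h

theorem no_dense' (hp : p.Prime) :
    ¬ ({μ : ProbabilityMeasure (Xp p) | μ.toMeasure.map (alphaHat p) = μ.toMeasure} ⊆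
        closure {μ : ProbabilityMeasure (Xp p) |
          μ.toMeasure.map (alphaHat p) = μ.toMeasure ∧
          ∃ s : Finset (Xp p), μ.toMeasure (↑s : Set (Xp p))ᶜ = 0}) := by
  intro hsub
  set fb : BoundedContinuousFunction (Xp p) ℝ := BoundedContinuousFunction.mkOfCompact
    ⟨fun χ => (Ff p χ).re, Complex.continuous_re.comp (continuous_Ff p)⟩ with hfb_def
  have hfb : ∀ χ, fb χ = (Ff p χ).re := fun χ => rfl
  have hIcont : Continuous fun μ : ProbabilityMeasure (Xp p) =>
      ∫ χ, fb χ ∂(μ : Measure (Xp p)) :=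
    MeasureTheory.ProbabilityMeasure.continuous_integral_boundedContinuousFunction fb
  have hclosed : IsClosed {μ : ProbabilityMeasure (Xp p) |
      ∫ χ, fb χ ∂(μ : Measure (Xp p)) = 0} := isClosed_eq hIcont continuous_const
  have hSsub : {μ : ProbabilityMeasure (Xp p) |
      μ.toMeasure.map (alphaHat p) = μ.toMeasure ∧
      ∃ s : Finset (Xp p), μ.toMeasure (↑s : Set (Xp p))ᶜ = 0} ⊆
      {μ : ProbabilityMeasure (Xp p) | ∫ χ, fb χ ∂(μ : Measure (Xp p)) = 0} := by
    rintro ν ⟨hinv, s, hs⟩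
    show ∫ χ, fb χ ∂(ν : Measure (Xp p)) = 0
    have : ∫ χ, fb χ ∂(ν : Measure (Xp p)) = ∫ χ, (Ff p χ).re ∂(ν : Measure (Xp p)) := by
      simp only [hfb]
    rw [this, integral_re_Ff, integral_Ff_zero hp (ν : Measure (Xp p)) hinv s hs,
      Complex.zero_re]
  have hclosSub := closure_minimal hSsub hclosed
  set μstarP : ProbabilityMeasure (Xp p) := ⟨mustar p, inferInstance⟩ with hμstar_def
  have hμinvP : μstarP ∈ {μ : ProbabilityMeasure (Xp p) |
      μ.toMeasure.map (alphaHat p) = μ.toMeasure} := mustar_invariant p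
  have h0 : ∫ χ, fb χ ∂(μstarP : Measure (Xp p)) = 0 := hclosSub (hsub hμinvP)
  have hval : ∫ χ, fb χ ∂(μstarP : Measure (Xp p))
      = (((Circle.exp (2 * π * (p:ℝ)⁻¹)) : ℂ) - 1).re := by
    have h1 : ∫ χ, fb χ ∂(μstarP : Measure (Xp p)) = ∫ χ, (Ff p χ).re ∂(mustar p) := by
      simp only [hfb]; rfl
    rw [h1, integral_re_Ff, integral_Ff_mustar]
  rw [hval] at h0
  exact re_z0_ne_zero p hp h0

end NoDense

/-- the `α̂`-invariant probability measures with finite support are not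
dense (for the topology of weak convergence) in the set of all `α̂`-invariant
probability measures on the dual of `ℤ[1/p]²`. -/
theorem no_dense_periodic_measures (p : ℕ) (hp : p.Prime) :
    ¬ ({μ : ProbabilityMeasure (Xp p) | μ.toMeasure.map (alphaHat p) = μ.toMeasure} ⊆
        closure {μ : ProbabilityMeasure (Xp p) |
          μ.toMeasure.map (alphaHat p) = μ.toMeasure ∧
          ∃ s : Finset (Xp p), μ.toMeasure (↑s : Set (Xp p))ᶜ = 0}) := by
  exact NoDense.no_dense' p hp
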